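/- Let k be a non-archimedean local field with ring of integers, D a composition algebra over k of dimension 1 or 2 (so D = k or a quadratic étale/field extension with norm N_D), and consider the action of SL_n(D) on rank-one elements of the space of n×n hermitian matrices H_n(D) (n ≥ 2). Then two rank-one elements t·e₁ and u·e₁ (t, u ∈ k^×, e₁ the first diagonal matrix unit) lie in the same SL_n(D)-orbit if and only if t/u ∈ N_D(D^×); hence the orbits of SL_n(D) on rank-one hermitian matrices are parameterized by k^×/N_D(D^×). -/

import Mathlib

open Matrix

private lemma aux_entry {D : Type*} [CommRing D] [StarRing D] {n : ℕ}
    (A : Matrix (Fin n) (Fin n) D) (i0 : Fin n) (c : D) (i j : Fin n) :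
    (A * Matrix.single i0 i0 c * Aᴴ) i j = A i i0 * c * star (A j i0) := by
  rw [Matrix.mul_apply]
  rw [Finset.sum_eq_single i0]
  · rw [Matrix.mul_single_apply_same, Matrix.conjTranspose_apply]
  · intro b _ hb
    rw [Matrix.mul_single_apply_of_ne (hbj := hb), zero_mul]
  · simp


/-- Orbits of `SL_n(D)` on rank-one hermitian matrices, for `D` a composition algebra of
dimension 1 or 2 over a non-archimedean local field `k = ℚ_p`: the rank-one elements
`t·e₁` and `u·e₁` lie in the same `SL_n(D)`-orbit iff `t/u` is a norm from `D^×`;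
hence the orbits are parameterized by `k^×/N_D(D^×)`. -/
theorem stmt_19 {p : ℕ} [Fact p.Prime]
    {D : Type*} [CommRing D] [Algebra ℚ_[p] D] [StarRing D]
    (hstarAlg : ∀ a : ℚ_[p], star (algebraMap ℚ_[p] D a) = algebraMap ℚ_[p] D a)
    (hnorm : ∀ u : D, ∃ c : ℚ_[p], u * star u = algebraMap ℚ_[p] D c)
    (hdim : Module.finrank ℚ_[p] D = 1 ∨ Module.finrank ℚ_[p] D = 2)
    {n : ℕ} (hn : 2 ≤ n)
    (t u : ℚ_[p]) (ht : t ≠ 0) (hu : u ≠ 0) :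
    let e₁ : Matrix (Fin n) (Fin n) D :=
      Matrix.single (⟨0, by omega⟩ : Fin n) (⟨0, by omega⟩ : Fin n) 1
    (∃ g : Matrix.SpecialLinearGroup (Fin n) D,
      (g : Matrix (Fin n) (Fin n) D) * (t • e₁) * (g : Matrix (Fin n) (Fin n) D)ᴴ
        = u • e₁) ↔
    ∃ d : D, IsUnit d ∧ algebraMap ℚ_[p] D t = algebraMap ℚ_[p] D u * (d * star d) := by
  intro e₁
  have h0 : 0 < n := by omega
  have h1 : 1 < n := by omega
  set i0 : Fin n := ⟨0, h0⟩ with hi0def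
  have hsmul : ∀ c : ℚ_[p], c • e₁ = Matrix.single i0 i0 (algebraMap ℚ_[p] D c) := by
    intro c
    show c • Matrix.single _ _ (1 : D) = _
    rw [Matrix.smul_single, Algebra.smul_def, mul_one]
  constructor
  · rintro ⟨g, hg⟩
    set a : D := (g : Matrix (Fin n) (Fin n) D) i0 i0 with hadef
    have key : a * algebraMap ℚ_[p] D t * star a = algebraMap ℚ_[p] D u := by
      have := congrFun (congrFun hg i0) i0
      rw [hsmul t, hsmul u, aux_entry] at this
      rw [this, Matrix.single_apply_same]
    have haU : IsUnit a := by
      refine IsUnit.of_mul_eq_one (a := a) (algebraMap ℚ_[p] D t * star a * algebraMap ℚ_[p] D u⁻¹) ?_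
      rw [← mul_assoc, ← mul_assoc, key, ← _root_.map_mul, mul_inv_cancel₀ hu, _root_.map_one]
    obtain ⟨aU, haU⟩ := haU
    refine ⟨↑aU⁻¹, (aU⁻¹).isUnit, ?_⟩
    rw [← key, ← haU]
    rw [show (↑aU : D) * algebraMap ℚ_[p] D t * star ↑aU * (↑aU⁻¹ * star ↑aU⁻¹)
        = algebraMap ℚ_[p] D t * ((↑aU * ↑aU⁻¹) * star ((↑aU : D) * ↑aU⁻¹)) from by
      rw [StarMul.star_mul]; ring]
    rw [aU.mul_inv, star_one, mul_one, mul_one]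
  · rintro ⟨d, hd, hEq⟩
    obtain ⟨dU, rfl⟩ := hd
    set i1 : Fin n := ⟨1, h1⟩ with hi1def
    have h01 : i0 ≠ i1 := by simp [hi0def, hi1def, Fin.ext_iff]
    set v : Fin n → D := fun i => if i = i0 then (↑dU⁻¹ : D) else if i = i1 then (↑dU : D) else 1
      with hvdef
    have hv0 : v i0 = ↑dU⁻¹ := by rw [hvdef]; simp
    have hdet : (Matrix.diagonal v).det = 1 := by
      rw [Matrix.det_diagonal]
      rw [show v = fun i => (if i = i0 then (↑dU⁻¹ : D) else 1) * (if i = i1 then (↑dU : D) else 1)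
        from by
          funext i
          rw [hvdef]
          by_cases hx : i = i0 <;> by_cases hy : i = i1 <;> simp_all]
      rw [Finset.prod_mul_distrib, Finset.prod_ite_eq' Finset.univ, Finset.prod_ite_eq' Finset.univ]
      simp
    refine ⟨⟨Matrix.diagonal v, hdet⟩, ?_⟩
    show Matrix.diagonal v * (t • e₁) * (Matrix.diagonal v)ᴴ = u • e₁
    rw [hsmul t, hsmul u]
    ext i j
    rw [aux_entry]
    by_cases hi : i = i0 <;> by_cases hj : j = i0
    · subst hi; subst hj
      rw [Matrix.diagonal_apply_eq, Matrix.single_apply_same, hv0, hEq]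
      rw [show (↑dU⁻¹ : D) * (algebraMap ℚ_[p] D u * (↑dU * star ↑dU)) * star ↑dU⁻¹
          = algebraMap ℚ_[p] D u * ((↑dU * ↑dU⁻¹) * star ((↑dU : D) * ↑dU⁻¹)) from by
        rw [StarMul.star_mul]; ring]
      rw [dU.mul_inv, star_one, mul_one, mul_one]
    · rw [Matrix.diagonal_apply_ne' _ (fun h => hj h.symm), star_zero, mul_zero,
        Matrix.single_apply_of_ne _ _ _ _ _ (by tauto)]
    · rw [Matrix.diagonal_apply_ne _ hi, zero_mul, zero_mul,
        Matrix.single_apply_of_ne _ _ _ _ _ (by tauto)]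
    · rw [Matrix.diagonal_apply_ne _ hi, zero_mul, zero_mul,
        Matrix.single_apply_of_ne _ _ _ _ _ (by tauto)]
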